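/- If X ⊆ ℤ is finite with hX = A₁ ∪ [b, hN - c] ∪ (hN - A₂) where A₁ ⊆ [0, b-2], A₂ ⊆ [0, c-2], and τ ≥ max(b,c) and b + τ ≤ hN - c + 1, then for the union of two translates: (hX) ∪ (τ + hX) = A₁ ∪ [b, τ + hN - c] ∪ (τ + hN - A₂). -/
import Mathlib

open Finset Pointwise

/-- `hsum h A` is the `h`-fold sumset of `A` (pointwise sum of `h` copies). -/
def hsum (h : ℕ) (A : Finset ℤ) : Finset ℤ := ∑ _i ∈ Finset.range h, A

/-- `transl t A` is the translate `t + A`. -/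
def transl (t : ℤ) (A : Finset ℤ) : Finset ℤ := A.image (t + ·)
theorem stmt_2 (X A₁ A₂ : Finset ℤ) (h : ℕ) (N b c τ : ℤ)
    (hN : 0 ≤ N) (hb : 0 ≤ b) (hc : 0 ≤ c) (hτ0 : 0 ≤ τ)
    (hX : hsum h X = A₁ ∪ Finset.Icc b ((h : ℤ) * N - c) ∪ A₂.image (fun a => (h : ℤ) * N - a))
    (hA₁ : A₁ ⊆ Finset.Icc 0 (b - 2)) (hA₂ : A₂ ⊆ Finset.Icc 0 (c - 2))
    (hτ : max b c ≤ τ) (hbig : b + τ ≤ (h : ℤ) * N - c + 1) :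
    hsum h X ∪ transl τ (hsum h X) =
      A₁ ∪ Finset.Icc b (τ + (h : ℤ) * N - c) ∪
        A₂.image (fun a => τ + (h : ℤ) * N - a) := by
  have hbτ : b ≤ τ := le_trans (le_max_left b c) hτ
  have hcτ : c ≤ τ := le_trans (le_max_right b c) hτ
  ext x
  simp only [hX, transl, image_union, mem_union, mem_image, mem_Icc]
  constructor
  · rintro (((h1 | h2) | ⟨a, ha, rfl⟩) | ((⟨y, hy1, rfl⟩ | ⟨y, hy2, rfl⟩) | ⟨y, ⟨a, ha, rfl⟩, rfl⟩))
    · exact Or.inl (Or.inl h1)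
    · exact Or.inl (Or.inr ⟨h2.1, by linarith [h2.2]⟩)
    · have := mem_Icc.mp (hA₂ ha)
      exact Or.inl (Or.inr ⟨by omega, by omega⟩)
    · have := mem_Icc.mp (hA₁ hy1)
      exact Or.inl (Or.inr ⟨by omega, by omega⟩)
    · exact Or.inl (Or.inr ⟨by omega, by omega⟩)
    · exact Or.inr ⟨a, ha, by ring⟩  -- forward image case
  · rintro ((h1 | h2) | ⟨a, ha, rfl⟩)
    · exact Or.inl (Or.inl (Or.inl h1))
    · by_cases hx : x ≤ (h : ℤ) * N - c
      · exact Or.inl (Or.inl (Or.inr ⟨h2.1, hx⟩))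
      · exact Or.inr (Or.inl (Or.inr ⟨x - τ, ⟨by omega, by omega⟩, by ring⟩))
    · exact Or.inr (Or.inr ⟨(h : ℤ) * N - a, ⟨a, ha, rfl⟩, by ring⟩)
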